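/- For fibrewise pointed maps f, g : X → Y over B, D_B(f, g) ≤ (cat_B^*(f) + 1) · (cat_B^*(g) + 1). -/

import Mathlib

open scoped unitInterval

variable {B X Y Z X' Y' : Type*} [TopologicalSpace B] [TopologicalSpace X]
  [TopologicalSpace Y] [TopologicalSpace Z] [TopologicalSpace X'] [TopologicalSpace Y']

/-- `f` and `g` are fibrewise homotopic over `B` on the subset `U ⊆ X`:
there is a homotopy `H` from `f|U` to `g|U` each of whose stages is fibrewise. -/
def FibHomotopicOn (pX : X → B) (pY : Y → B) (f g : X → Y) (U : Set X) : Prop :=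
  ∃ H : C(U × unitInterval, Y),
    (∀ u : U, H (u, 0) = f u) ∧ (∀ u : U, H (u, 1) = g u) ∧
    (∀ (u : U) (t : unitInterval), pY (H (u, t)) = pX u)

/-- The parametrized (fibrewise) homotopic distance `D_B(f,g)`: the least `n`
such that `X` has an open cover by `n+1` sets on each of which `f` and `g` are
fibrewise homotopic (`∞` if there is no such cover). -/
noncomputable def fibDist (pX : X → B) (pY : Y → B) (f g : X → Y) : ℕ∞ :=
  sInf ((fun n : ℕ => (n : ℕ∞)) ''
    {n : ℕ | ∃ U : Fin (n + 1) → Set X,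
      (∀ i, IsOpen (U i)) ∧ (⋃ i, U i) = Set.univ ∧
      ∀ i, FibHomotopicOn pX pY f g (U i)})


private lemma FibHomotopicOn.mono' {pX : X → B} {pY : Y → B} {f g : X → Y} {U W : Set X}
    (h : FibHomotopicOn pX pY f g U) (hWU : W ⊆ U) : FibHomotopicOn pX pY f g W := by
  obtain ⟨H, h0, h1, hp⟩ := h
  refine ⟨⟨fun p => H (Set.inclusion hWU p.1, p.2), ?_⟩, ?_, ?_, ?_⟩
  · exact H.continuous.comp
      (((continuous_inclusion hWU).comp continuous_fst).prodMk continuous_snd)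
  · intro u; exact h0 _
  · intro u; exact h1 _
  · intro u t; exact hp _ _

private lemma FibHomotopicOn.trans' {pX : X → B} {pY : Y → B} {f g h : X → Y} {U : Set X}
    (h1 : FibHomotopicOn pX pY f h U) (h2 : FibHomotopicOn pX pY g h U) :
    FibHomotopicOn pX pY f g U := by
  obtain ⟨H1, h10, h11, h1p⟩ := h1
  obtain ⟨H2, h20, h21, h2p⟩ := h2
  set sg : ℝ → unitInterval := Set.projIcc 0 1 zero_le_one with hsg
  have hsg0 : sg 0 = 0 := Set.projIcc_left _
  have hsg1 : sg 1 = 1 := Set.projIcc_right _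
  refine ⟨⟨fun p => if (p.2 : ℝ) ≤ 1/2 then H1 (p.1, sg (2 * (p.2 : ℝ)))
      else H2 (p.1, sg (2 - 2 * (p.2 : ℝ))), ?_⟩, ?_, ?_, ?_⟩
  · apply Continuous.if_le
    · exact H1.continuous.comp (continuous_fst.prodMk
        (continuous_projIcc.comp (continuous_const.mul
          (continuous_subtype_val.comp continuous_snd))))
    · exact H2.continuous.comp (continuous_fst.prodMk
        (continuous_projIcc.comp (continuous_const.sub (continuous_const.mul
          (continuous_subtype_val.comp continuous_snd)))))
    · exact continuous_subtype_val.comp continuous_snd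
    · exact continuous_const
    · intro p hp
      have h2t : (2 : ℝ) * (p.2 : ℝ) = 1 := by rw [hp]; norm_num
      have h2t' : (2 : ℝ) - 2 * (p.2 : ℝ) = 1 := by rw [hp]; norm_num
      rw [h2t, show (2:ℝ) - 1 = 1 by norm_num, hsg1, h11, h21]
  · intro u
    have hc : ((0 : unitInterval) : ℝ) = 0 := rfl
    simp only [ContinuousMap.coe_mk, hc, mul_zero, hsg0]
    rw [if_pos (by norm_num), h10]
  · intro u
    have hc : ((1 : unitInterval) : ℝ) = 1 := rfl
    simp only [ContinuousMap.coe_mk, hc, mul_one]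
    rw [if_neg (by norm_num), show (2:ℝ) - 2 = 0 by norm_num, hsg0, h20]
  · intro u t
    simp only [ContinuousMap.coe_mk]
    by_cases ht : (t : ℝ) ≤ 1/2
    · rw [if_pos ht]; exact h1p _ _
    · rw [if_neg ht]; exact h2p _ _

theorem fibDist_le_mul_cats (pX : X → B) (pY : Y → B) (sX : B → X) (sY : B → Y)
    (f g : X → Y)
    (hpX : Continuous pX) (hpY : Continuous pY) (hsX : Continuous sX) (hsY : Continuous sY)
    (hsecX : ∀ b, pX (sX b) = b) (hsecY : ∀ b, pY (sY b) = b)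
    (hf : Continuous f) (hg : Continuous g)
    (hfp : ∀ x, pY (f x) = pX x) (hgp : ∀ x, pY (g x) = pX x)
    (hfs : ∀ b, f (sX b) = sY b) (hgs : ∀ b, g (sX b) = sY b) :
    fibDist pX pY f g ≤
      (fibDist pX pY f (fun x => sY (pX x)) + 1) *
        (fibDist pX pY g (fun x => sY (pX x)) + 1) := by
  set h : X → Y := fun x => sY (pX x) with hh
  set Sf := ((fun n : ℕ => (n : ℕ∞)) ''
    {n : ℕ | ∃ U : Fin (n + 1) → Set X,
      (∀ i, IsOpen (U i)) ∧ (⋃ i, U i) = Set.univ ∧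
      ∀ i, FibHomotopicOn pX pY f h (U i)}) with hSf
  set Sg := ((fun n : ℕ => (n : ℕ∞)) ''
    {n : ℕ | ∃ U : Fin (n + 1) → Set X,
      (∀ i, IsOpen (U i)) ∧ (⋃ i, U i) = Set.univ ∧
      ∀ i, FibHomotopicOn pX pY g h (U i)}) with hSg
  have hdf : fibDist pX pY f h = sInf Sf := rfl
  have hdg : fibDist pX pY g h = sInf Sg := rfl
  by_cases hft : fibDist pX pY f h = ⊤
  · rw [hft]
    have : (⊤ + 1 : ℕ∞) = ⊤ := rfl
    rw [this, ENat.top_mul (by simp)]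
    exact le_top
  by_cases hgt : fibDist pX pY g h = ⊤
  · rw [hgt]
    have : (⊤ + 1 : ℕ∞) = ⊤ := rfl
    rw [this, ENat.mul_top (by simp)]
    exact le_top
  -- both finite: extract covers
  have hfne : Sf.Nonempty := by
    by_contra hc
    rw [Set.not_nonempty_iff_eq_empty] at hc
    rw [hdf, hc, sInf_empty] at hft
    exact hft rfl
  have hgne : Sg.Nonempty := by
    by_contra hc
    rw [Set.not_nonempty_iff_eq_empty] at hc
    rw [hdg, hc, sInf_empty] at hgt
    exact hgt rfl
  have hfmem : sInf Sf ∈ Sf := csInf_mem hfne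
  have hgmem : sInf Sg ∈ Sg := csInf_mem hgne
  rw [hdf, hdg]
  obtain ⟨n, ⟨U, hUo, hUc, hUh⟩, hn⟩ := hfmem
  obtain ⟨m, ⟨V, hVo, hVc, hVh⟩, hm⟩ := hgmem
  rw [← hn, ← hm]
  set N : ℕ := n * m + n + m with hN
  have hNe : N + 1 = (n + 1) * (m + 1) := by ring
  -- the product cover
  set W : Fin (N + 1) → Set X := fun k =>
    U (finProdFinEquiv.symm (Fin.cast hNe k)).1 ∩
      V (finProdFinEquiv.symm (Fin.cast hNe k)).2 with hW
  have hmemN : (N : ℕ∞) ∈ ((fun n : ℕ => (n : ℕ∞)) ''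
      {n : ℕ | ∃ U : Fin (n + 1) → Set X,
        (∀ i, IsOpen (U i)) ∧ (⋃ i, U i) = Set.univ ∧
        ∀ i, FibHomotopicOn pX pY f g (U i)}) := by
    refine ⟨N, ⟨W, ?_, ?_, ?_⟩, rfl⟩
    · intro k; exact (hUo _).inter (hVo _)
    · apply Set.eq_univ_of_forall
      intro x
      have hx1 : x ∈ ⋃ i, U i := hUc ▸ Set.mem_univ x
      have hx2 : x ∈ ⋃ i, V i := hVc ▸ Set.mem_univ x
      obtain ⟨i, hi⟩ := Set.mem_iUnion.1 hx1
      obtain ⟨j, hj⟩ := Set.mem_iUnion.1 hx2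
      refine Set.mem_iUnion.2 ⟨Fin.cast hNe.symm (finProdFinEquiv (i, j)), ?_⟩
      simp only [hW, Fin.cast_cast, Fin.cast_eq_self, Equiv.symm_apply_apply]
      exact ⟨hi, hj⟩
    · intro k
      exact FibHomotopicOn.trans'
        ((hUh _).mono' Set.inter_subset_left)
        ((hVh _).mono' Set.inter_subset_right)
  calc sInf _ ≤ (N : ℕ∞) := sInf_le hmemN
    _ ≤ ((n : ℕ∞) + 1) * ((m : ℕ∞) + 1) := by
        have : ((n : ℕ∞) + 1) * ((m : ℕ∞) + 1) = (((n + 1) * (m + 1) : ℕ) : ℕ∞) := by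
          push_cast; ring
        rw [this, ← hNe]
        exact_mod_cast Nat.le_succ N
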